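/- Let D ≥ 1 and let 𝓕 and 𝓖 be finite sets of polynomials in ℤ[x_1,…,x_D]. Suppose there exist an algebraically closed field K of characteristic 0 and a point a ∈ K^D such that f(a) = 0 for every f ∈ 𝓕 and g(a) ≠ 0 for some g ∈ 𝓖 (polynomials being evaluated via the canonical ring homomorphism ℤ → K). Then there exists N ∈ ℕ such that for every prime p > N, taking k to be an algebraic closure of 𝔽_p, there is a point b ∈ k^D with f(b) = 0 for every f ∈ 𝓕 and g(b) ≠ 0 for some g ∈ 𝓖 (evaluation via the canonical homomorphism ℤ → k). (This is the spreading-out principle proved in part (B) of the proof of the paper's reduction theorem.) -/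

import Mathlib

open FirstOrder Language Field Ring

noncomputable def solTerm {D : ℕ} (f : MvPolynomial (Fin D) ℤ) :
    Language.ring.Term (Fin D ⊕ Fin 0) :=
  Term.relabel Sum.inl (termOfFreeCommRing ((freeCommRingEquivMvPolynomialInt (Fin D)).symm f))

noncomputable def solSentence (D : ℕ) (𝓕 𝓖 : Finset (MvPolynomial (Fin D) ℤ)) :
    Language.ring.Sentence :=
  Formula.iExs (α := Empty) (Fin D) (Formula.relabel (Sum.inr : Fin D → Empty ⊕ Fin D)
    ((BoundedFormula.iInf (fun f : 𝓕 => solTerm f.1 =' 0)) ⊓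
     (BoundedFormula.iSup (fun g : 𝓖 => ∼(solTerm g.1 =' 0)))))

lemma lift_symm_eq_aeval {D : ℕ} {R : Type*} [CommRing R] (v : Fin D → R)
    (f : MvPolynomial (Fin D) ℤ) :
    FreeCommRing.lift v ((freeCommRingEquivMvPolynomialInt (Fin D)).symm f) =
      MvPolynomial.aeval v f := by
  have : (FreeCommRing.lift v).comp
      (freeCommRingEquivMvPolynomialInt (Fin D)).symm.toRingHom =
      (MvPolynomial.aeval v).toRingHom := by
    apply MvPolynomial.ringHom_ext
    · intro n; simp [freeCommRingEquivMvPolynomialInt]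
    · intro i; simp [freeCommRingEquivMvPolynomialInt]
  exact RingHom.congr_fun this f

lemma realize_solSentence {D : ℕ} (𝓕 𝓖 : Finset (MvPolynomial (Fin D) ℤ))
    {R : Type*} [Field R] [CompatibleRing R] :
    R ⊨ solSentence D 𝓕 𝓖 ↔
      ∃ b : Fin D → R, (∀ f ∈ 𝓕, MvPolynomial.aeval b f = 0) ∧
        ∃ g ∈ 𝓖, MvPolynomial.aeval b g ≠ 0 := by
  simp [solSentence, solTerm, Sentence.Realize, Formula.Realize,
    lift_symm_eq_aeval, Term.equal, Formula.relabel, BoundedFormula.realize_relabel,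
    BoundedFormula.realize_iInf, BoundedFormula.realize_iSup, Function.comp_def]

/-- **Spreading-out principle.**  If a finite system of integer polynomial equations
`f = 0` (`f ∈ 𝓕`) together with the non-vanishing of at least one `g ∈ 𝓖` has a solution
over some algebraically closed field of characteristic zero, then for all sufficiently
large primes `p` it has a solution over an algebraic closure of `𝔽_p`. -/
theorem spreading_out_principle (D : ℕ) (hD : 1 ≤ D)
    (𝓕 𝓖 : Finset (MvPolynomial (Fin D) ℤ))
    (K : Type*) [Field K] [IsAlgClosed K] [CharZero K] (a : Fin D → K)
    (hzero : ∀ f ∈ 𝓕, MvPolynomial.aeval a f = 0)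
    (hnonzero : ∃ g ∈ 𝓖, MvPolynomial.aeval a g ≠ 0) :
    ∃ N : ℕ, ∀ (p : ℕ) [Fact p.Prime], N < p →
      ∃ b : Fin D → AlgebraicClosure (ZMod p),
        (∀ f ∈ 𝓕, MvPolynomial.aeval b f = 0) ∧
        ∃ g ∈ 𝓖, MvPolynomial.aeval b g ≠ 0 := by
  letI := compatibleRingOfRing K
  haveI : CharP K 0 := CharP.ofCharZero K
  have hK : K ⊨ solSentence D 𝓕 𝓖 := (realize_solSentence 𝓕 𝓖).2 ⟨a, hzero, hnonzero⟩
  have h0 : Theory.ACF 0 ⊨ᵇ solSentence D 𝓕 𝓖 :=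
    ((ACF_isComplete (Or.inr rfl)).realize_sentence_iff _ K).1 hK
  have hfin := finite_ACF_prime_not_realize_of_ACF_zero_realize _ h0
  refine ⟨hfin.toFinset.sup (fun q => (q : ℕ)), ?_⟩
  intro p hp hNp
  have hmodels : Theory.ACF p ⊨ᵇ solSentence D 𝓕 𝓖 := by
    by_contra h
    have hmem : (⟨p, hp.out⟩ : Nat.Primes) ∈ hfin.toFinset := by
      exact hfin.mem_toFinset.2 h
    have := Finset.le_sup (f := fun q : Nat.Primes => (q : ℕ)) hmem
    simp only [Nat.Primes.coe_nat_inj] at this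
    omega
  letI := compatibleRingOfRing (AlgebraicClosure (ZMod p))
  haveI : CharP (AlgebraicClosure (ZMod p)) p :=
    charP_of_injective_algebraMap
      (RingHom.injective (algebraMap (ZMod p) (AlgebraicClosure (ZMod p)))) p
  have hreal : AlgebraicClosure (ZMod p) ⊨ solSentence D 𝓕 𝓖 :=
    ((ACF_isComplete (Or.inl hp.out)).realize_sentence_iff _ (AlgebraicClosure (ZMod p))).2 hmodels
  exact (realize_solSentence 𝓕 𝓖).1 hreal
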